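/- For fixed c > 0, let q(P̄) solve c · E_1(c/q) = P̄ and set P_out(P̄) = 1 − exp(−c/q(P̄)). Then lim_{P̄→∞} (ln ln(1/P_out(P̄)))/(ln P̄) = 1; equivalently, −ln P_out(P̄) grows like P̄/c up to additive logarithmic terms. -/

import Mathlib

open MeasureTheory Real Filter

/-- The exponential integral `E₁(x) = ∫_x^∞ e^{-t}/t dt`. -/
noncomputable def E1 (x : ℝ) : ℝ := ∫ t in Set.Ioi x, Real.exp (-t) / t

lemma E1_integrableOn {x : ℝ} (hx : 0 < x) :
    IntegrableOn (fun t => Real.exp (-t) / t) (Set.Ioi x) := by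
  apply integrable_of_isBigO_exp_neg (b := 1) one_pos
  · apply ContinuousOn.div (by fun_prop) continuousOn_id
    intro t ht
    exact ne_of_gt (lt_of_lt_of_le hx ht)
  · rw [Asymptotics.isBigO_iff]
    refine ⟨1 / x, Filter.eventually_atTop.2 ⟨x, fun t ht => ?_⟩⟩
    have ht0 : 0 < t := lt_of_lt_of_le hx ht
    have h1 : Real.exp (-t) / t ≤ Real.exp (-t) / x :=
      div_le_div_of_nonneg_left (Real.exp_pos _).le hx ht
    rw [Real.norm_eq_abs, Real.norm_eq_abs, abs_of_pos (by positivity),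
      abs_of_pos (Real.exp_pos _)]
    calc Real.exp (-t) / t ≤ Real.exp (-t) / x := h1
    _ = 1 / x * Real.exp (-1 * t) := by ring_nf
    _ ≤ 1 / x * Real.exp (-1 * t) := le_refl _

lemma E1_antitone {x y : ℝ} (hx : 0 < x) (hxy : x ≤ y) : E1 y ≤ E1 x := by
  have hy : 0 < y := lt_of_lt_of_le hx hxy
  apply setIntegral_mono_set (E1_integrableOn hx)
  · filter_upwards [ae_restrict_mem measurableSet_Ioi] with t ht
    have : 0 < t := lt_of_lt_of_le hx (le_of_lt ht)
    positivity
  · exact HasSubset.Subset.eventuallyLE (Set.Ioi_subset_Ioi hxy)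

lemma E1_split {x : ℝ} (hx : 0 < x) (hx1 : x ≤ 1) :
    E1 x = (∫ t in x..1, Real.exp (-t) / t) + ∫ t in Set.Ioi 1, Real.exp (-t) / t := by
  have h1 : Set.Ioc x 1 ∪ Set.Ioi 1 = Set.Ioi x := Set.Ioc_union_Ioi_eq_Ioi hx1
  rw [E1, ← h1, setIntegral_union (Set.Ioc_disjoint_Ioi le_rfl) measurableSet_Ioi
    ((E1_integrableOn hx).mono_set (by rw [← h1]; exact Set.subset_union_left))
    ((E1_integrableOn hx).mono_set (by rw [← h1]; exact Set.subset_union_right)),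
    intervalIntegral.integral_of_le hx1]

lemma ivi_exp {x : ℝ} (hx : 0 < x) : IntervalIntegrable (fun t => Real.exp (-t) / t)
    MeasureTheory.volume x 1 := by
  apply ContinuousOn.intervalIntegrable
  apply ContinuousOn.div (by fun_prop) continuousOn_id
  intro t ht
  rcases Set.mem_uIcc.1 ht with h | h
  · exact ne_of_gt (lt_of_lt_of_le hx h.1)
  · exact ne_of_gt (lt_of_lt_of_le one_pos h.1)

lemma ivi_inv {x : ℝ} (hx : 0 < x) : IntervalIntegrable (fun t => 1 / t)
    MeasureTheory.volume x 1 := by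
  apply ContinuousOn.intervalIntegrable
  apply ContinuousOn.div continuousOn_const continuousOn_id
  intro t ht
  rcases Set.mem_uIcc.1 ht with h | h
  · exact ne_of_gt (lt_of_lt_of_le hx h.1)
  · exact ne_of_gt (lt_of_lt_of_le one_pos h.1)

lemma E1_upper {x : ℝ} (hx : 0 < x) (hx1 : x ≤ 1) : E1 x ≤ Real.log (1 / x) + 1 := by
  rw [E1_split hx hx1]
  have h1 : (∫ t in x..1, Real.exp (-t) / t) ≤ ∫ t in x..1, 1 / t := by
    apply intervalIntegral.integral_mono_on hx1 (ivi_exp hx) (ivi_inv hx)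
    intro t ht
    have ht0 : 0 < t := lt_of_lt_of_le hx ht.1
    apply div_le_div_of_nonneg_right _ ht0.le
    simpa using Real.exp_le_exp.2 (by linarith [ht.1] : -t ≤ 0)
  have h2 : (∫ t in Set.Ioi 1, Real.exp (-t) / t) ≤ ∫ t in Set.Ioi (1:ℝ), Real.exp (-t) := by
    apply setIntegral_mono_on ((E1_integrableOn hx).mono_set (Set.Ioi_subset_Ioi hx1))
      (by simpa using exp_neg_integrableOn_Ioi (1:ℝ) one_pos) measurableSet_Ioi
    intro t ht
    rw [Set.mem_Ioi] at ht
    nth_rewrite 2 [show Real.exp (-t) = Real.exp (-t) / 1 by ring]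
    exact div_le_div_of_nonneg_left (Real.exp_pos _).le one_pos (le_of_lt ht)
  rw [integral_one_div (by
    intro h; rcases Set.mem_uIcc.1 h with h | h <;> linarith [h.1, h.2])] at h1
  rw [integral_exp_neg_Ioi] at h2
  have h3 : Real.exp (-1) ≤ 1 := by
    rw [Real.exp_le_one_iff]; norm_num
  linarith

lemma E1_lower {x : ℝ} (hx : 0 < x) (hx1 : x ≤ 1) :
    Real.exp (-1) * Real.log (1 / x) ≤ E1 x := by
  rw [E1_split hx hx1]
  have h2 : (0:ℝ) ≤ ∫ t in Set.Ioi 1, Real.exp (-t) / t := by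
    apply setIntegral_nonneg measurableSet_Ioi
    intro t ht
    rw [Set.mem_Ioi] at ht
    positivity
  have h1 : (∫ t in x..1, Real.exp (-1) * (1 / t)) ≤ ∫ t in x..1, Real.exp (-t) / t := by
    apply intervalIntegral.integral_mono_on hx1 ((ivi_inv hx).const_mul _) (ivi_exp hx)
    intro t ht
    have ht0 : 0 < t := lt_of_lt_of_le hx ht.1
    rw [mul_one_div]
    apply div_le_div_of_nonneg_right _ ht0.le
    exact Real.exp_le_exp.2 (by linarith [ht.2])
  rw [intervalIntegral.integral_const_mul, integral_one_div (by
    intro h; rcases Set.mem_uIcc.1 h with h | h <;> linarith [h.1, h.2])] at h1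
  linarith

/-- key ratio lemma -/
lemma ratio_tendsto {u N D : ℝ → ℝ} {C : ℝ} (hC : 0 < C) (hu : Tendsto u atTop atTop)
    (hN : ∀ᶠ P in atTop, |N P - u P| ≤ C) (hD : ∀ᶠ P in atTop, |D P - u P| ≤ C) :
    Tendsto (fun P => N P / D P) atTop (nhds 1) := by
  have key : ∀ C' : ℝ, Tendsto (fun y : ℝ => (y - C') / (y + C')) atTop (nhds 1) := by
    intro C'
    have h1 : Tendsto (fun y : ℝ => (1 - C' / y) / (1 + C' / y)) atTop
        (nhds ((1 - 0) / (1 + 0))) := by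
      apply Tendsto.div ((tendsto_const_nhds).sub (tendsto_const_nhds.div_atTop tendsto_id))
        ((tendsto_const_nhds).add (tendsto_const_nhds.div_atTop tendsto_id))
      norm_num
    norm_num at h1
    apply h1.congr'
    filter_upwards [eventually_gt_atTop (|C'| + 1)] with y hy
    have hy0 : y ≠ 0 := by
      have := abs_nonneg C'; intro h; rw [h] at hy; linarith
    have hyC : y + C' ≠ 0 := by
      have := neg_abs_le C'; intro h; nlinarith
    field_simp
  have hlo := key C |>.comp hu
  have hhi : Tendsto (fun y : ℝ => (y + C) / (y - C)) atTop (nhds 1) := by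
    have := key (-C)
    simpa [sub_eq_add_neg] using this
  have hhi' := hhi.comp hu
  apply tendsto_of_tendsto_of_tendsto_of_le_of_le' hlo hhi'
  · filter_upwards [hN, hD, hu.eventually (eventually_gt_atTop (2 * C))] with P h1 h2 h3
    simp only [Function.comp]
    have hD1 : u P - C ≤ D P := by have := abs_le.1 h2; linarith
    have hD2 : D P ≤ u P + C := by have := abs_le.1 h2; linarith
    have hN1 : u P - C ≤ N P := by have := abs_le.1 h1; linarith
    apply div_le_div₀ (by linarith) (by linarith) (by linarith) hD2
  · filter_upwards [hN, hD, hu.eventually (eventually_gt_atTop (2 * C))] with P h1 h2 h3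
    simp only [Function.comp]
    have hD1 : u P - C ≤ D P := by have := abs_le.1 h2; linarith
    have hN2 : N P ≤ u P + C := by have := abs_le.1 h1; linarith
    apply div_le_div₀ (by linarith) hN2 (by linarith) hD1

/-- If `q(P̄) > 0` solves `c·E₁(c/q) = P̄` and
`P_out(P̄) = 1 − exp(−c/q(P̄))`, then
`lim_{P̄→∞} ln ln(1/P_out(P̄)) / ln P̄ = 1`. -/
theorem stmt14 (c : ℝ) (hc : 0 < c) (q : ℝ → ℝ)
    (hq : ∀ Pbar : ℝ, 0 < Pbar → 0 < q Pbar ∧ c * E1 (c / q Pbar) = Pbar)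
    (Pout : ℝ → ℝ)
    (hPout : ∀ Pbar : ℝ, 0 < Pbar → Pout Pbar = 1 - Real.exp (-(c / q Pbar))) :
    Tendsto (fun Pbar : ℝ => Real.log (Real.log (1 / Pout Pbar)) / Real.log Pbar)
      atTop (nhds 1) := by
  set x : ℝ → ℝ := fun P => c / q P with hxdef
  set L : ℝ → ℝ := fun P => Real.log (1 / x P) with hLdef
  -- Tendsto L atTop atTop
  have hxpos : ∀ P, 0 < P → 0 < x P := fun P hP => div_pos hc (hq P hP).1
  have hLP : ∀ P, L P = -Real.log (x P) := fun P => by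
    simp [hLdef, Real.log_inv]
  have hL : Tendsto L atTop atTop := by
    rw [tendsto_atTop]
    intro b
    set b' := max b 0 with hb'
    filter_upwards [eventually_gt_atTop (c * (b' + 1)), eventually_gt_atTop 0] with P hP hP0
    have hxP := hxpos P hP0
    have hxlt : x P < Real.exp (-b') := by
      by_contra h
      push_neg at h
      have hE : E1 (x P) ≤ E1 (Real.exp (-b')) := E1_antitone (Real.exp_pos _) h
      have hE2 : E1 (Real.exp (-b')) ≤ Real.log (1 / Real.exp (-b')) + 1 := by
        apply E1_upper (Real.exp_pos _)
        rw [Real.exp_le_one_iff]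
        simp [hb', le_max_right]
      rw [one_div, ← Real.exp_neg, Real.log_exp, neg_neg] at hE2
      have hP' : c * E1 (x P) = P := (hq P hP0).2
      nlinarith
    have : b' < L P := by
      rw [hLP]
      have h := Real.log_lt_log hxP hxlt
      rw [Real.log_exp] at h
      linarith
    exact le_of_lt (lt_of_le_of_lt (le_max_left b 0) this)
  -- now the main squeeze
  apply ratio_tendsto (C := |Real.log c| + 1) (by positivity)
    (u := fun P => Real.log (L P)) (tendsto_log_atTop.comp hL)
  · -- numerator bound : |log (log (1 / Pout P)) - log (L P)| ≤ |log c| + 1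
    filter_upwards [eventually_gt_atTop 0, hL.eventually (eventually_ge_atTop 2)] with P hP0 hL2
    have hxP := hxpos P hP0
    have hxe : x P = Real.exp (-(L P)) := by
      rw [hLP, neg_neg, Real.exp_log hxP]
    have hxhalf : x P ≤ Real.exp (-2) := by rw [hxe]; exact Real.exp_le_exp.2 (by linarith)
    have hxlt : x P < 1 / 2 := by
      refine lt_of_le_of_lt hxhalf ?_
      have h2 : (2:ℝ) < Real.exp 2 := by nlinarith [Real.add_one_le_exp (2:ℝ)]
      have hm : Real.exp (-2) * Real.exp 2 = 1 := by
        rw [← Real.exp_add]; norm_num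
      nlinarith [Real.exp_pos (-2:ℝ)]
    have hPoutEq := hPout P hP0
    -- Pout bounds: x/2 ≤ Pout ≤ x
    have hub : Pout P ≤ x P := by
      rw [hPoutEq]
      have := Real.add_one_le_exp (-(x P))
      linarith
    have hlb : x P / 2 ≤ Pout P := by
      rw [hPoutEq]
      have h1 := Real.add_one_le_exp (x P)
      have h2 : 1 - Real.exp (-(x P)) = Real.exp (-(x P)) * (Real.exp (x P) - 1) := by
        rw [mul_sub, ← Real.exp_add, neg_add_cancel, Real.exp_zero, mul_one]
      have h3 : Real.exp (-(x P)) ≥ 1/2 := by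
        rw [ge_iff_le, ← Real.log_le_iff_le_exp (by norm_num)]
        rw [Real.log_div one_ne_zero two_ne_zero, Real.log_one]
        have := Real.log_two_gt_d9
        linarith
      nlinarith [hxP]
    have hPoutpos : 0 < Pout P := lt_of_lt_of_le (by linarith) hlb
    -- log(1/Pout) bounds : L ≤ log(1/Pout) ≤ L + log 2
    have hlogub : Real.log (1 / Pout P) ≤ L P + Real.log 2 := by
      rw [hLP, one_div, Real.log_inv]
      have := Real.log_le_log (by linarith : (0:ℝ) < x P / 2) hlb
      rw [Real.log_div (ne_of_gt hxP) two_ne_zero] at this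
      linarith
    have hloglb : L P ≤ Real.log (1 / Pout P) := by
      rw [hLP, one_div, Real.log_inv]
      have := Real.log_le_log hPoutpos hub
      linarith
    -- final : |log(log(1/Pout)) - log L| ≤ 1
    have hLpos : (0:ℝ) < L P := by linarith
    have hfin1 : Real.log (L P) ≤ Real.log (Real.log (1 / Pout P)) :=
      Real.log_le_log hLpos hloglb
    have hfin2 : Real.log (Real.log (1 / Pout P)) ≤ Real.log (L P) + 1 := by
      have h1 : Real.log (1 / Pout P) ≤ 2 * L P := by
        have : Real.log 2 ≤ 1 := by
          have := Real.log_two_lt_d9; linarith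
        nlinarith
      have := Real.log_le_log (by linarith) h1
      rw [Real.log_mul two_ne_zero (ne_of_gt hLpos)] at this
      have h2 : Real.log 2 ≤ 1 := by have := Real.log_two_lt_d9; linarith
      linarith
    rw [abs_le]
    constructor <;> nlinarith [abs_nonneg (Real.log c)]
  · -- denominator bound : |log P - log (L P)| ≤ |log c| + 1
    filter_upwards [eventually_gt_atTop 0, hL.eventually (eventually_ge_atTop 2)] with P hP0 hL2
    have hxP := hxpos P hP0
    have hxe : x P = Real.exp (-(L P)) := by
      rw [hLP, neg_neg, Real.exp_log hxP]
    have hx1 : x P ≤ 1 := by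
      rw [hxe, Real.exp_le_one_iff]; linarith
    have hlogx : Real.log (1 / x P) = L P := by
      rw [hLP, one_div, Real.log_inv]
    have hEub : E1 (x P) ≤ L P + 1 := by
      have := E1_upper hxP hx1; rwa [hlogx] at this
    have hElb : Real.exp (-1) * L P ≤ E1 (x P) := by
      have := E1_lower hxP hx1; rwa [hlogx] at this
    have hLpos : (0:ℝ) < L P := by linarith
    have hEpos : 0 < E1 (x P) := lt_of_lt_of_le (by positivity) hElb
    have hPeq : P = c * E1 (x P) := ((hq P hP0).2).symm
    have hlogP : Real.log P = Real.log c + Real.log (E1 (x P)) := by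
      conv_lhs => rw [hPeq]
      rw [Real.log_mul (ne_of_gt hc) (ne_of_gt hEpos)]
    have h1 : Real.log (E1 (x P)) ≤ Real.log (L P) + 1 := by
      have ha := Real.log_le_log hEpos hEub
      have hb : Real.log (L P + 1) ≤ Real.log (2 * L P) :=
        Real.log_le_log (by linarith) (by linarith)
      rw [Real.log_mul two_ne_zero (ne_of_gt hLpos)] at hb
      have h2 : Real.log 2 ≤ 1 := by have := Real.log_two_lt_d9; linarith
      linarith
    have h2 : Real.log (L P) - 1 ≤ Real.log (E1 (x P)) := by
      have ha := Real.log_le_log (by positivity) hElb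
      rw [Real.log_mul (ne_of_gt (Real.exp_pos _)) (ne_of_gt hLpos), Real.log_exp] at ha
      linarith
    rw [hlogP, abs_le]
    have hca : -|Real.log c| ≤ Real.log c := neg_abs_le _
    have hcb : Real.log c ≤ |Real.log c| := le_abs_self _
    constructor <;> linarith
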